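/- Let X be a simplicial complex on V with L(X) = M(X) = 2 that admits a weak shelling ≺ with M_≺(X) = M(X). Then for every W ⊆ V with H̃_1(X[W]) ≠ 0, the graph given by the 1-skeleton of X[W] contains an induced cycle whose homology class generates H̃_1(X[W]), and moreover dim H̃_1(X[W]) ≤ 1. -/

import Mathlib

open Finset

variable {V : Type*} [DecidableEq V] [Fintype V]

/-- An abstract simplicial complex: a finite collection of faces closed under subsets. -/
def IsComplex (X : Finset (Finset V)) : Prop :=
  ∀ s ∈ X, ∀ t, t ⊆ s → t ∈ X

/-- A collection of faces is a simplex if it is the full power set of some vertex set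
(possibly empty). -/
def IsSimplexC (Y : Finset (Finset V)) : Prop := ∃ τ : Finset V, Y = τ.powerset

/-- The induced subcomplex `X[W]`. -/
def indOn (X : Finset (Finset V)) (W : Finset V) : Finset (Finset V) :=
  X.filter (fun s => s ⊆ W)

/-- The `ℤ/2ℤ` boundary of a chain, a chain being recorded as the finite set of faces with
coefficient `1`.  The coefficient of `τ` in `∂ c` is the parity of the number of faces of `c`
covering `τ`.  (This includes the augmentation `∂₀`, with `∅` playing the role of the
generator of `C₋₁`, so homology is reduced homology.) -/
def bdry (c : Finset (Finset V)) : Finset (Finset V) :=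
  Finset.univ.filter (fun τ => Odd (c.filter (fun s => τ ⊆ s ∧ s.card = τ.card + 1)).card)

/-- Sum of chains over `ℤ/2ℤ` (symmetric difference). -/
def chAdd (c d : Finset (Finset V)) : Finset (Finset V) := (c \ d) ∪ (d \ c)

/-- An `n`-dimensional chain of `X` (each face has `n+1` vertices). -/
def IsNChain (X : Finset (Finset V)) (n : ℕ) (c : Finset (Finset V)) : Prop :=
  c ⊆ X ∧ ∀ s ∈ c, s.card = n + 1

/-- An `n`-cycle of `X` (reduced: `0`-cycles have evenly many vertices). -/
def IsNCycle (X : Finset (Finset V)) (n : ℕ) (c : Finset (Finset V)) : Prop :=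
  IsNChain X n c ∧ bdry c = ∅

/-- An `n`-boundary of `X`. -/
def IsNBdry (X : Finset (Finset V)) (n : ℕ) (c : Finset (Finset V)) : Prop :=
  ∃ d, IsNChain X (n + 1) d ∧ bdry d = c

/-- `X` is `d`-Leray: all reduced homology of induced subcomplexes vanishes in
dimensions `≥ d`. -/
def IsLeray (X : Finset (Finset V)) (d : ℕ) : Prop :=
  ∀ W : Finset V, ∀ i : ℕ, d ≤ i → ∀ c,
    IsNCycle (indOn X W) i c → IsNBdry (indOn X W) i c

/-- The Leray number `L(X)`. -/
noncomputable def lerayNum (X : Finset (Finset V)) : ℕ := sInf {d | IsLeray X d}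

/-- The facets (maximal faces) of `X`. -/
def facetsOf (X : Finset (Finset V)) : Finset (Finset V) :=
  X.filter (fun s => ∀ t ∈ X, s ⊆ t → s = t)

/-- `σ 0, …, σ (m-1)` is an enumeration (linear ordering) of the facets of `X`. -/
def IsFacetEnum (X : Finset (Finset V)) (m : ℕ) (σ : ℕ → Finset V) : Prop :=
  (∀ i, i < m → σ i ∈ facetsOf X) ∧ (∀ s ∈ facetsOf X, ∃ i, i < m ∧ σ i = s) ∧
    (∀ i j, i < m → j < m → σ i = σ j → i = j)

/-- `X_j = ⋃_{i < j} Δ(σ i)`. -/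
def cUnion (σ : ℕ → Finset V) (j : ℕ) : Finset (Finset V) :=
  (Finset.range j).biUnion (fun i => (σ i).powerset)

-- `Mval σ j = M_≺(X_{j+1})`: starts at `1`, increases by `1` exactly when the newly
-- attached simplex meets the union of the previous ones in a non-simplex.
open Classical in
noncomputable def Mval (σ : ℕ → Finset V) : ℕ → ℕ
  | 0 => 1
  | (j+1) => Mval σ j + (if IsSimplexC (cUnion σ (j+1) ∩ (σ (j+1)).powerset) then 0 else 1)

/-- `M(X)`: the minimum of `M_≺(X)` over all facet orderings. -/
noncomputable def Mnum (X : Finset (Finset V)) : ℕ :=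
  sInf {k | ∃ m σ, 0 < m ∧ IsFacetEnum X m σ ∧ k = Mval σ (m - 1)}

/-- The facet ordering `σ 0 ≺ ⋯ ≺ σ (m-1)` is a weak shelling. -/
def IsWeakShelling (σ : ℕ → Finset V) (m : ℕ) : Prop :=
  ∀ j, 1 ≤ j → j < m → ∃ u ∈ σ j, IsSimplexC (indOn (cUnion σ j) ((σ j).erase u))

/-- `c` is the edge set of a cycle (graph cycle, length `≥ 3`). -/
def IsCycleEdges (c : Finset (Finset V)) : Prop :=
  ∃ n : ℕ, 3 ≤ n ∧ ∃ f : ℕ → V, (∀ i j, i < n → j < n → f i = f j → i = j) ∧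
    c = (Finset.range n).image (fun i => ({f i, f ((i + 1) % n)} : Finset V))

set_option linter.unusedSectionVars false
set_option maxHeartbeats 1000000
open scoped symmDiff

lemma chAdd_eq_symmDiff (c d : Finset (Finset V)) : chAdd c d = c ∆ d := rfl

lemma mem_bdry {c : Finset (Finset V)} {τ : Finset V} :
    τ ∈ bdry c ↔ Odd (c.filter (fun s => τ ⊆ s ∧ s.card = τ.card + 1)).card := by
  simp [bdry]

lemma bdry_empty : bdry (∅ : Finset (Finset V)) = ∅ := by
  ext τ; simp [mem_bdry]

lemma filter_symmDiff (p : Finset V → Prop) [DecidablePred p] (c d : Finset (Finset V)) :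
    (c ∆ d).filter p = (c.filter p) ∆ (d.filter p) := by
  ext s; simp [symmDiff_def, mem_filter, mem_union, mem_sdiff]; tauto

lemma card_symmDiff_parity (a b : Finset (Finset V)) :
    Odd ((a ∆ b).card) ↔ (Odd a.card ↔ ¬ Odd b.card) := by
  have h1 : (a ∆ b).card = (a \ b).card + (b \ a).card := by
    rw [symmDiff_def]; exact card_union_of_disjoint (disjoint_sdiff_sdiff)
  have h2 : (a \ b).card + (a ∩ b).card = a.card := card_sdiff_add_card_inter a b
  have h3 : (b \ a).card + (b ∩ a).card = b.card := card_sdiff_add_card_inter b a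
  have h4 : (a ∩ b).card = (b ∩ a).card := by rw [inter_comm]
  simp only [Nat.odd_iff] at *
  omega

lemma bdry_chAdd (c d : Finset (Finset V)) : bdry (chAdd c d) = chAdd (bdry c) (bdry d) := by
  rw [chAdd_eq_symmDiff, chAdd_eq_symmDiff]
  ext τ
  rw [mem_bdry, filter_symmDiff, card_symmDiff_parity]
  simp only [mem_symmDiff, mem_bdry]
  tauto

def deg (c : Finset (Finset V)) (x : V) : ℕ := (c.filter (fun s => x ∈ s)).card

lemma filter_deg (c : Finset (Finset V)) (hc : ∀ s ∈ c, s.card = 2) (x : V) :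
    c.filter (fun s => ({x} : Finset V) ⊆ s ∧ s.card = ({x} : Finset V).card + 1)
      = c.filter (fun s => x ∈ s) := by
  apply filter_congr
  intro s hs
  simp [hc s hs, singleton_subset_iff]

lemma bdry_one_chain (c : Finset (Finset V)) (hc : ∀ s ∈ c, s.card = 2) :
    bdry c = (univ.filter fun x : V => Odd (deg c x)).image (fun x => ({x} : Finset V)) := by
  ext τ
  simp only [mem_bdry, mem_image, mem_filter, mem_univ, true_and]
  constructor
  · intro h
    have hne : (c.filter (fun s => τ ⊆ s ∧ s.card = τ.card + 1)).card ≠ 0 := by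
      intro h0; rw [h0] at h; simp at h
    rw [← pos_iff_ne_zero, card_pos] at hne
    obtain ⟨s, hs⟩ := hne
    simp only [mem_filter] at hs
    have hcard : τ.card = 1 := by have := hc s hs.1; omega
    obtain ⟨x, rfl⟩ := card_eq_one.mp hcard
    refine ⟨x, ?_, rfl⟩
    rwa [deg, ← filter_deg c hc]
  · rintro ⟨x, hx, rfl⟩
    rwa [filter_deg c hc]

lemma zmod2_cast (n : ℕ) : (n : ZMod 2) = if Odd n then 1 else 0 := by
  rcases Nat.even_or_odd n with h | h
  · simp [Nat.not_odd_iff_even.mpr h, ZMod.natCast_eq_zero_iff_even.mpr h]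
  · simp [h, ZMod.natCast_eq_one_iff_odd.mpr h]

lemma handshake (c : Finset (Finset V)) (hc : ∀ s ∈ c, s.card = 2) :
    Even ((univ.filter fun x : V => Odd (deg c x)).card) := by
  rw [← ZMod.natCast_eq_zero_iff_even]
  have h1 : ((univ.filter fun x : V => Odd (deg c x)).card : ZMod 2)
      = ∑ x : V, ((deg c x : ℕ) : ZMod 2) := by
    rw [← Finset.sum_boole]
    apply Finset.sum_congr rfl
    intro x _
    rw [zmod2_cast]
  rw [h1]
  have h2 : ∀ x : V, ((deg c x : ℕ) : ZMod 2) = ∑ s ∈ c, (if x ∈ s then (1 : ZMod 2) else 0) := by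
    intro x
    rw [deg, ← Finset.sum_boole]
  simp only [h2]
  rw [Finset.sum_comm]
  have h3 : ∀ s ∈ c, (∑ x : V, if x ∈ s then (1 : ZMod 2) else 0) = 0 := by
    intro s hs
    rw [Finset.sum_boole]
    have : univ.filter (fun x : V => x ∈ s) = s := by ext x; simp
    rw [this, hc s hs]
    rfl
  rw [Finset.sum_congr rfl h3]
  simp

lemma bdry_eq_empty_iff_even_deg (c : Finset (Finset V)) (hc : ∀ s ∈ c, s.card = 2)
    (hb : bdry c = ∅) : ∀ x : V, ¬ Odd (deg c x) := by
  intro x hx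
  have := bdry_one_chain c hc
  rw [hb] at this
  have : ({x} : Finset V) ∈ ((∅ : Finset (Finset V))) := by
    rw [this]
    exact mem_image.mpr ⟨x, by simp [hx], rfl⟩
  simp at this

lemma pairing (τ w' : Finset V) (hw : w' ⊆ τ) (he : Even w'.card) :
    ∃ d : Finset (Finset V), (∀ e ∈ d, e.card = 2 ∧ e ⊆ τ) ∧
      bdry d = w'.image (fun x => ({x} : Finset V)) := by
  rcases eq_or_ne w' ∅ with rfl | hne
  · exact ⟨∅, by simp, by simp [bdry_empty]⟩
  obtain ⟨v₀, hv₀⟩ := nonempty_iff_ne_empty.mpr hne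
  set d : Finset (Finset V) := (w'.erase v₀).image (fun x => ({v₀, x} : Finset V)) with hd
  have hmem : ∀ e ∈ d, ∃ x ∈ w'.erase v₀, e = {v₀, x} := by
    intro e he'
    obtain ⟨x, hx, rfl⟩ := mem_image.mp he'
    exact ⟨x, hx, rfl⟩
  have hcard2 : ∀ e ∈ d, e.card = 2 := by
    intro e he'
    obtain ⟨x, hx, rfl⟩ := hmem e he'
    exact card_pair (fun h => (ne_of_mem_erase hx) h.symm)
  have hdeg : ∀ y : V, Odd (deg d y) ↔ y ∈ w' := by
    intro y
    by_cases hyv : y = v₀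
    · subst hyv
      have : d.filter (fun s => y ∈ s) = d := by
        apply filter_true_of_mem
        intro e he'
        obtain ⟨x, _, rfl⟩ := hmem e he'
        simp
      rw [deg, this]
      have hcd : d.card = (w'.erase y).card := by
        rw [hd]
        apply card_image_of_injOn
        intro a ha b hb hab
        simp only at hab
        have h1 : a ∈ ({y, b} : Finset V) := by rw [← hab]; simp
        rcases mem_insert.mp h1 with h | h
        · exact absurd h (ne_of_mem_erase ha)
        · exact mem_singleton.mp h
      rw [hcd, card_erase_of_mem hv₀]
      have hpos : 0 < w'.card := card_pos.mpr ⟨y, hv₀⟩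
      rw [Nat.even_iff] at he
      constructor
      · intro _; exact hv₀
      · intro _; rw [Nat.odd_iff]; omega
    · have : d.filter (fun s => y ∈ s) = if y ∈ w'.erase v₀ then {({v₀, y} : Finset V)} else ∅ := by
        ext e
        simp only [mem_filter]
        constructor
        · rintro ⟨he', hy⟩
          obtain ⟨x, hx, rfl⟩ := hmem e he'
          have : y = x := by
            rcases mem_insert.mp hy with h | h
            · exact absurd h hyv
            · exact mem_singleton.mp h
          subst this
          simp [hx]
        · intro h
          split_ifs at h with h'
          · rw [mem_singleton.mp h]
            constructor
            · exact mem_image.mpr ⟨y, h', rfl⟩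
            · simp
          · simp at h
      rw [deg, this]
      split_ifs with h'
      · simp only [card_singleton]
        simp only [mem_erase] at h'
        simp [h'.2]
      · simp only [card_empty]
        have : y ∉ w' := by
          intro hy
          exact h' (mem_erase.mpr ⟨hyv, hy⟩)
        simp [this]
  refine ⟨d, ?_, ?_⟩
  · intro e he'
    obtain ⟨x, hx, rfl⟩ := hmem e he'
    refine ⟨hcard2 _ he', ?_⟩
    intro y hy
    rcases mem_insert.mp hy with h | h
    · subst h; exact hw hv₀
    · rw [mem_singleton.mp h]; exact hw (mem_of_mem_erase hx)
  · rw [bdry_one_chain d hcard2]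
    congr 1
    ext y
    simp [hdeg]

lemma cone (θ : Finset V) (z : Finset (Finset V)) (hz1 : ∀ e ∈ z, e ⊆ θ)
    (hz2 : ∀ e ∈ z, e.card = 2) (hzc : bdry z = ∅) :
    ∃ D, (∀ t ∈ D, t.card = 3 ∧ t ⊆ θ) ∧ bdry D = z := by
  rcases eq_or_ne z ∅ with rfl | hne
  · exact ⟨∅, by simp, bdry_empty⟩
  obtain ⟨e₀, he₀⟩ := nonempty_iff_ne_empty.mpr hne
  have : 0 < e₀.card := by rw [hz2 e₀ he₀]; norm_num
  obtain ⟨v₀, hv₀e⟩ := card_pos.mp this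
  have hv₀θ : v₀ ∈ θ := hz1 e₀ he₀ hv₀e
  set z0 := z.filter (fun e => v₀ ∉ e) with hz0
  set D : Finset (Finset V) := z0.image (insert v₀) with hD
  have hinj : Set.InjOn (insert v₀) (z0 : Set (Finset V)) := by
    intro a ha b hb hab
    have ha' : v₀ ∉ a := (mem_filter.mp ha).2
    have hb' : v₀ ∉ b := (mem_filter.mp hb).2
    rw [← erase_insert ha', ← erase_insert hb', hab]
  have hmemD : ∀ t ∈ D, ∃ e, e ∈ z ∧ v₀ ∉ e ∧ t = insert v₀ e := by
    intro t ht
    obtain ⟨e, he, rfl⟩ := mem_image.mp ht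
    rw [hz0, mem_filter] at he
    exact ⟨e, he.1, he.2, rfl⟩
  have hcard3 : ∀ t ∈ D, t.card = 3 := by
    intro t ht
    obtain ⟨e, he, hv, rfl⟩ := hmemD t ht
    rw [card_insert_of_notMem hv, hz2 e he]
  refine ⟨D, ?_, ?_⟩
  · intro t ht
    obtain ⟨e, he, hv, ht'⟩ := hmemD t ht
    subst ht'
    exact ⟨hcard3 _ ht, insert_subset hv₀θ (hz1 e he)⟩
  · -- bdry D = z
    ext τ
    rw [mem_bdry]
    by_cases hτ2 : τ.card = 2
    · have hfil : D.filter (fun t => τ ⊆ t ∧ t.card = τ.card + 1)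
          = D.filter (fun t => τ ⊆ t) := by
        apply filter_congr
        intro t ht
        simp [hcard3 t ht, hτ2]
      rw [hfil, hD, filter_image, card_image_of_injOn (hinj.mono (coe_subset.mpr (filter_subset _ _)))]
      by_cases hv₀τ : v₀ ∈ τ
      · -- τ = {v₀, x}
        obtain ⟨x, hxmem⟩ : ∃ x, τ.erase v₀ = {x} := by
          apply card_eq_one.mp
          rw [card_erase_of_mem hv₀τ, hτ2]
        have hxv : x ≠ v₀ := by
          have : x ∈ τ.erase v₀ := by rw [hxmem]; exact mem_singleton_self x
          exact ne_of_mem_erase this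
        have hτeq : τ = {v₀, x} := by
          rw [← insert_erase hv₀τ, hxmem]
        have hcond : ∀ e ∈ z0, (τ ⊆ insert v₀ e ↔ x ∈ e) := by
          intro e he
          have hv : v₀ ∉ e := (mem_filter.mp he).2
          constructor
          · intro h
            have : x ∈ insert v₀ e := h (by rw [hτeq]; simp)
            rcases mem_insert.mp this with h' | h'
            · exact absurd h' hxv
            · exact h'
          · intro h
            rw [hτeq]
            exact insert_subset (mem_insert_self _ _) (singleton_subset_iff.mpr (mem_insert_of_mem h))
        rw [filter_congr hcond]
        -- z0.filter (x ∈ ·) relates to deg z x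
        have h1eq : z0.filter (fun e => x ∈ e) = z.filter (fun e => x ∈ e ∧ v₀ ∉ e) := by
          ext e; simp only [hz0, Finset.filter_filter, mem_filter]; tauto
        have h2eq : z.filter (fun e => x ∈ e)
            = (z.filter (fun e => x ∈ e ∧ v₀ ∈ e)) ∪ (z.filter (fun e => x ∈ e ∧ v₀ ∉ e)) := by
          ext e; simp only [mem_filter, mem_union]; tauto
        have h3dj : Disjoint (z.filter (fun e => x ∈ e ∧ v₀ ∈ e))
            (z.filter (fun e => x ∈ e ∧ v₀ ∉ e)) := by
          rw [disjoint_left]; intro e he1 he2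
          simp only [mem_filter] at he1 he2; tauto
        have hsplit : (z.filter (fun e => x ∈ e)).card
            = (z.filter (fun e => x ∈ e ∧ v₀ ∈ e)).card + (z0.filter (fun e => x ∈ e)).card := by
          rw [h2eq, card_union_of_disjoint h3dj, h1eq]
        have hboth : z.filter (fun e => x ∈ e ∧ v₀ ∈ e) = if τ ∈ z then {τ} else ∅ := by
          ext e
          simp only [mem_filter]
          constructor
          · rintro ⟨he, hx, hv⟩
            have : τ ⊆ e := by rw [hτeq]; exact insert_subset hv (singleton_subset_iff.mpr hx)
            have heτ : e = τ := (eq_of_subset_of_card_le this (by rw [hz2 e he, hτ2])).symm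
            subst heτ
            simp [he]
          · intro h
            split_ifs at h with h'
            · rw [mem_singleton.mp h]
              refine ⟨h', ?_, hv₀τ⟩
              rw [hτeq]; simp
            · simp at h
        have hdegeven : ¬ Odd (deg z x) := bdry_eq_empty_iff_even_deg z hz2 hzc x
        rw [deg] at hdegeven
        constructor
        · intro hodd
          by_contra hτz
          rw [hboth, if_neg hτz] at hsplit
          simp at hsplit
          rw [← hsplit] at hodd
          exact hdegeven hodd
        · intro hτz
          rw [hboth, if_pos hτz] at hsplit
          simp at hsplit
          rw [Nat.odd_iff] at hdegeven ⊢
          omega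
      · -- v₀ ∉ τ
        have hcond : ∀ e ∈ z0, (τ ⊆ insert v₀ e ↔ e = τ) := by
          intro e he
          have hv : v₀ ∉ e := (mem_filter.mp he).2
          have he2 : e.card = 2 := hz2 e (mem_filter.mp he).1
          constructor
          · intro h
            have hsub : τ ⊆ e := by
              intro y hy
              rcases mem_insert.mp (h hy) with h' | h'
              · exact absurd (h' ▸ hy) hv₀τ
              · exact h'
            exact (eq_of_subset_of_card_le hsub (by omega)).symm
          · rintro rfl
            exact subset_insert _ _
        rw [filter_congr hcond]
        have : z0.filter (fun e => e = τ) = if τ ∈ z then {τ} else ∅ := by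
          ext e
          simp only [mem_filter, hz0]
          constructor
          · rintro ⟨⟨hez, _⟩, rfl⟩
            simp [hez]
          · intro h
            split_ifs at h with h'
            · rw [mem_singleton.mp h]
              exact ⟨⟨h', hv₀τ⟩, rfl⟩
            · simp at h
        rw [this]
        split_ifs with h'
        · simpa using h'
        · simpa using h'
    · -- τ.card ≠ 2 : both sides false
      have : D.filter (fun t => τ ⊆ t ∧ t.card = τ.card + 1) = ∅ := by
        rw [filter_eq_empty_iff]
        intro t ht
        rw [hcard3 t ht]
        rintro ⟨_, h⟩
        omega
      rw [this]
      simp only [card_empty]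
      constructor
      · intro h; simp at h
      · intro h; exact absurd (hz2 τ h) hτ2



lemma isNChain_chAdd {A c d : Finset (Finset V)} {n : ℕ}
    (hc : IsNChain A n c) (hd : IsNChain A n d) : IsNChain A n (chAdd c d) := by
  constructor
  · intro s hs
    rcases mem_union.mp hs with h | h
    · exact hc.1 (mem_sdiff.mp h).1
    · exact hd.1 (mem_sdiff.mp h).1
  · intro s hs
    rcases mem_union.mp hs with h | h
    · exact hc.2 s (mem_sdiff.mp h).1
    · exact hd.2 s (mem_sdiff.mp h).1

lemma isNBdry_chAdd {A c d : Finset (Finset V)} {n : ℕ}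
    (hc : IsNBdry A n c) (hd : IsNBdry A n d) : IsNBdry A n (chAdd c d) := by
  obtain ⟨D₁, hD₁, hb₁⟩ := hc
  obtain ⟨D₂, hD₂, hb₂⟩ := hd
  exact ⟨chAdd D₁ D₂, isNChain_chAdd hD₁ hD₂, by rw [bdry_chAdd, hb₁, hb₂]⟩

lemma isNBdry_empty (A : Finset (Finset V)) (n : ℕ) : IsNBdry A n ∅ :=
  ⟨∅, ⟨empty_subset _, by simp⟩, bdry_empty⟩

lemma odd_deg_mem {c : Finset (Finset V)} {x : V} (h : Odd (deg c x)) :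
    ∃ e ∈ c, x ∈ e := by
  have : (c.filter (fun s => x ∈ s)).card ≠ 0 := by
    intro h0; rw [deg, h0] at h; simp at h
  rw [← pos_iff_ne_zero, card_pos] at this
  obtain ⟨e, he⟩ := this
  exact ⟨e, (mem_filter.mp he).1, (mem_filter.mp he).2⟩

lemma step_reduce (K : Finset (Finset V)) (θ τc : Finset V)
    (hKd : ∀ s ∈ K, ∀ t, t ⊆ s → t ∈ K)
    (hpairK : ∀ e : Finset V, e ⊆ τc → e.card = 2 → e ∈ K)
    (hτθ : τc ⊆ θ)
    (z : Finset (Finset V)) (hz : IsNCycle (K ∪ θ.powerset) 1 z)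
    (hsing : ∀ x : V, ({x} : Finset V) ∈ K → x ∈ θ → ({x} : Finset V) ∈ bdry (z ∩ K) → x ∈ τc) :
    ∃ z', IsNCycle K 1 z' ∧ ∃ D, (∀ t ∈ D, t.card = 3 ∧ t ⊆ θ) ∧ z = chAdd z' (bdry D) := by
  obtain ⟨⟨hzsub, hzcard⟩, hzbd⟩ := hz
  set a := z ∩ K with ha
  set b := z \ K with hb
  have hdjab : Disjoint a b := by
    rw [disjoint_left]
    intro e he1 he2
    exact (mem_sdiff.mp he2).2 (mem_inter.mp he1).2
  have hzab : z = a ∆ b := by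
    rw [Disjoint.symmDiff_eq_sup hdjab]
    ext e; simp only [ha, hb, sup_eq_union, mem_union, mem_inter, mem_sdiff]; tauto
  have haK : a ⊆ K := inter_subset_right
  have hbθ : b ⊆ θ.powerset := by
    intro e he
    rcases mem_union.mp (hzsub (mem_sdiff.mp he).1) with h | h
    · exact absurd h (mem_sdiff.mp he).2
    · exact h
  have hacard : ∀ s ∈ a, s.card = 2 := fun s hs => hzcard s (mem_inter.mp hs).1
  have hbcard : ∀ s ∈ b, s.card = 2 := fun s hs => hzcard s (mem_sdiff.mp hs).1
  have hbdab : bdry a = bdry b := by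
    have : bdry z = bdry a ∆ bdry b := by rw [hzab, ← chAdd_eq_symmDiff, bdry_chAdd]; rfl
    rw [hzbd] at this
    have := this.symm
    rwa [← bot_eq_empty, symmDiff_eq_bot] at this
  set w' : Finset V := univ.filter (fun x => Odd (deg a x)) with hw'
  have hwa : bdry a = w'.image (fun x => ({x} : Finset V)) := bdry_one_chain a hacard
  have hweven : Even w'.card := handshake a hacard
  have hw'τ : w' ⊆ τc := by
    intro x hx
    have hodd : Odd (deg a x) := (mem_filter.mp hx).2
    obtain ⟨e, hea, hxe⟩ := odd_deg_mem hodd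
    have hxK : ({x} : Finset V) ∈ K := hKd e (haK hea) {x} (singleton_subset_iff.mpr hxe)
    have hxw : ({x} : Finset V) ∈ bdry a := by
      rw [hwa]; exact mem_image.mpr ⟨x, hx, rfl⟩
    have hxθ : x ∈ θ := by
      have hxb : ({x} : Finset V) ∈ bdry b := hbdab ▸ hxw
      rw [bdry_one_chain b hbcard] at hxb
      obtain ⟨y, hy, hyx⟩ := mem_image.mp hxb
      have hxy : y = x := by
        have := singleton_injective hyx; exact this
      subst hxy
      obtain ⟨e', heb, hxe'⟩ := odd_deg_mem (mem_filter.mp hy).2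
      exact mem_powerset.mp (hbθ heb) hxe'
    exact hsing x hxK hxθ hxw
  obtain ⟨d, hdprop, hdbd⟩ := pairing τc w' hw'τ hweven
  have hdK : d ⊆ K := fun e he => hpairK e (hdprop e he).2 (hdprop e he).1
  have hbd_ad : bdry d = bdry a := by rw [hdbd, hwa]
  set z' := a ∆ d with hz'
  have hz'cyc : IsNCycle K 1 z' := by
    refine ⟨⟨?_, ?_⟩, ?_⟩
    · intro s hs
      rcases mem_symmDiff.mp hs with ⟨h, _⟩ | ⟨h, _⟩
      · exact haK h
      · exact hdK h
    · intro s hs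
      rcases mem_symmDiff.mp hs with ⟨h, _⟩ | ⟨h, _⟩
      · exact hacard s h
      · exact (hdprop s h).1
    · rw [hz', ← chAdd_eq_symmDiff, bdry_chAdd, chAdd_eq_symmDiff, hbd_ad, symmDiff_self]
      rfl
  set y := b ∆ d with hy
  have hycard : ∀ s ∈ y, s.card = 2 := by
    intro s hs
    rcases mem_symmDiff.mp hs with ⟨h, _⟩ | ⟨h, _⟩
    · exact hbcard s h
    · exact (hdprop s h).1
  have hysub : ∀ s ∈ y, s ⊆ θ := by
    intro s hs
    rcases mem_symmDiff.mp hs with ⟨h, _⟩ | ⟨h, _⟩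
    · exact mem_powerset.mp (hbθ h)
    · exact (hdprop s h).2.trans hτθ
  have hybd : bdry y = ∅ := by
    rw [hy, ← chAdd_eq_symmDiff, bdry_chAdd, chAdd_eq_symmDiff, hbd_ad, ← hbdab, symmDiff_self]
    rfl
  obtain ⟨D, hDprop, hDbd⟩ := cone θ y hysub hycard hybd
  refine ⟨z', hz'cyc, D, hDprop, ?_⟩
  rw [hDbd, chAdd_eq_symmDiff, hz', hy]
  rw [symmDiff_assoc, symmDiff_comm b d, symmDiff_symmDiff_cancel_left]
  exact hzab



lemma cUnion_succ (σ : ℕ → Finset V) (j : ℕ) :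
    cUnion σ (j+1) = cUnion σ j ∪ (σ j).powerset := by
  rw [cUnion, cUnion, Finset.range_add_one, biUnion_insert, union_comm]

lemma cUnion_zero (σ : ℕ → Finset V) : cUnion σ 0 = ∅ := by
  simp [cUnion]

lemma cUnion_downclosed (σ : ℕ → Finset V) (j : ℕ) :
    ∀ s ∈ cUnion σ j, ∀ t, t ⊆ s → t ∈ cUnion σ j := by
  intro s hs t ht
  rw [cUnion, mem_biUnion] at hs ⊢
  obtain ⟨i, hi, hsi⟩ := hs
  exact ⟨i, hi, mem_powerset.mpr (ht.trans (mem_powerset.mp hsi))⟩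

lemma exists_facet (X : Finset (Finset V)) (s : Finset V) (hs : s ∈ X) :
    ∃ t ∈ facetsOf X, s ⊆ t := by
  obtain ⟨t, ht, hmax⟩ := Finset.exists_max_image (X.filter (fun t => s ⊆ t)) card
    ⟨s, mem_filter.mpr ⟨hs, subset_rfl⟩⟩
  rw [mem_filter] at ht
  refine ⟨t, mem_filter.mpr ⟨ht.1, ?_⟩, ht.2⟩
  intro t' ht' htt'
  apply eq_of_subset_of_card_le htt'
  exact hmax t' (mem_filter.mpr ⟨ht', ht.2.trans htt'⟩)

lemma X_eq_cUnion (X : Finset (Finset V)) (hX : IsComplex X) {m : ℕ} {σ : ℕ → Finset V}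
    (henum : IsFacetEnum X m σ) : X = cUnion σ m := by
  apply Finset.Subset.antisymm
  · intro s hs
    obtain ⟨t, htf, hst⟩ := exists_facet X s hs
    obtain ⟨i, him, rfl⟩ := henum.2.1 t htf
    rw [cUnion, mem_biUnion]
    exact ⟨i, mem_range.mpr him, mem_powerset.mpr hst⟩
  · intro s hs
    rw [cUnion, mem_biUnion] at hs
    obtain ⟨i, hi, hsi⟩ := hs
    have : σ i ∈ X := (mem_filter.mp (henum.1 i (mem_range.mp hi))).1
    exact hX (σ i) this s (mem_powerset.mp hsi)

open Classical in
lemma Mval_eq (σ : ℕ → Finset V) (t : ℕ) :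
    Mval σ t = 1 + ((Finset.Icc 1 t).filter
      (fun j => ¬ IsSimplexC (cUnion σ j ∩ (σ j).powerset))).card := by
  induction t with
  | zero => simp [Mval]
  | succ t ih =>
    have hsucc : Mval σ (t+1) = Mval σ t
        + (if IsSimplexC (cUnion σ (t+1) ∩ (σ (t+1)).powerset) then 0 else 1) := rfl
    rw [hsucc, ih]
    have hIcc : Finset.Icc 1 (t+1) = insert (t+1) (Finset.Icc 1 t) := by
      ext k; simp [Finset.mem_Icc, Finset.mem_insert]; omega
    rw [hIcc, filter_insert]
    split_ifs with h
    · simp [h]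
    · rw [card_insert_of_notMem (by simp [Finset.mem_Icc])]
      ring


open Classical in
lemma dim_le_one (X : Finset (Finset V)) (hX : IsComplex X)
    (m : ℕ) (σ : ℕ → Finset V) (hm : 0 < m) (henum : IsFacetEnum X m σ)
    (hws : IsWeakShelling σ m) (hMv : Mval σ (m-1) = 2) (W : Finset V)
    (c₁ c₂ : Finset (Finset V))
    (h₁ : IsNCycle (indOn X W) 1 c₁) (h₂ : IsNCycle (indOn X W) 1 c₂)
    (hb₁ : ¬ IsNBdry (indOn X W) 1 c₁) (hb₂ : ¬ IsNBdry (indOn X W) 1 c₂) :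
    IsNBdry (indOn X W) 1 (chAdd c₁ c₂) := by
  set A := indOn X W with hA
  set Kf : ℕ → Finset (Finset V) := fun j => indOn (cUnion σ j) W with hKf
  have hKfd : ∀ j, ∀ s ∈ Kf j, ∀ t, t ⊆ s → t ∈ Kf j := by
    intro j s hs t ht
    simp only [hKf, indOn, mem_filter] at hs ⊢
    exact ⟨cUnion_downclosed σ j s hs.1 t ht, ht.trans hs.2⟩
  have hKsucc : ∀ j, Kf (j+1) = Kf j ∪ (σ j ∩ W).powerset := by
    intro j
    ext s
    simp only [hKf, indOn, cUnion_succ, mem_filter, mem_union, mem_powerset,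
      subset_inter_iff]
    tauto
  have hK0 : Kf 0 = ∅ := by simp [hKf, indOn, cUnion_zero]
  have hAm : A = Kf m := by
    simp only [hA, hKf]
    rw [X_eq_cUnion X hX henum]
  have hpow : ∀ j, j < m → (σ j ∩ W).powerset ⊆ A := by
    intro j hj s hs
    rw [mem_powerset, subset_inter_iff] at hs
    simp only [hA, indOn, mem_filter]
    refine ⟨hX (σ j) ?_ s hs.1, hs.2⟩
    exact (mem_filter.mp (henum.1 j hj)).1
  -- extract the unique bad index
  have hm1 := Mval_eq σ (m-1)
  rw [hMv] at hm1
  have hcard1 : ((Finset.Icc 1 (m-1)).filter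
      (fun j => ¬ IsSimplexC (cUnion σ j ∩ (σ j).powerset))).card = 1 := by omega
  obtain ⟨j₁, hj₁⟩ := card_eq_one.mp hcard1
  have hj₁mem := mem_filter.mp (hj₁ ▸ mem_singleton_self j₁)
  have hj₁m : 1 ≤ j₁ ∧ j₁ ≤ m - 1 := Finset.mem_Icc.mp hj₁mem.1
  have hgood : ∀ j, 1 ≤ j → j ≤ m-1 → j ≠ j₁ → IsSimplexC (cUnion σ j ∩ (σ j).powerset) := by
    intro j h1 h2 hne
    by_contra h
    have : j ∈ (Finset.Icc 1 (m-1)).filter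
        (fun j => ¬ IsSimplexC (cUnion σ j ∩ (σ j).powerset)) :=
      mem_filter.mpr ⟨Finset.mem_Icc.mpr ⟨h1, h2⟩, h⟩
    rw [hj₁] at this
    exact hne (mem_singleton.mp this)
  -- generic step application
  have step_any : ∀ j, j < m → ∀ τ : Finset V,
      (∀ e, e ⊆ τ ∩ W → e.card = 2 → e ∈ Kf j) → (τ ⊆ σ j) →
      ∀ z, IsNCycle (Kf (j+1)) 1 z →
      (∀ x : V, ({x} : Finset V) ∈ Kf j → x ∈ σ j ∩ W →
        ({x} : Finset V) ∈ bdry (z ∩ Kf j) → x ∈ τ ∩ W) →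
      ∃ z', IsNCycle (Kf j) 1 z' ∧ ∃ D, IsNChain A 2 D ∧ z = chAdd z' (bdry D) := by
    intro j hj τ hpair hτσ z hz hsing
    have hz2 : IsNCycle (Kf j ∪ (σ j ∩ W).powerset) 1 z := by rw [← hKsucc j]; exact hz
    obtain ⟨z', hz'c, D, hD, heq⟩ := step_reduce (Kf j) (σ j ∩ W) (τ ∩ W)
      (hKfd j) hpair (inter_subset_inter hτσ Subset.rfl) z hz2 hsing
    refine ⟨z', hz'c, D, ⟨?_, fun t ht => (hD t ht).1⟩, heq⟩
    intro t ht
    exact hpow j hj (mem_powerset.mpr (hD t ht).2)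
  -- the good steps
  have good_inst : ∀ j, j < m → (j = 0 ∨ j ≠ j₁) → ∀ z, IsNCycle (Kf (j+1)) 1 z →
      ∃ z', IsNCycle (Kf j) 1 z' ∧ ∃ D, IsNChain A 2 D ∧ z = chAdd z' (bdry D) := by
    intro j hj hcase z hz
    rcases eq_or_ne j 0 with rfl | hj0
    · refine step_any 0 hj ∅ ?_ (empty_subset _) z hz ?_
      · intro e he hcard
        rw [empty_inter, subset_empty] at he
        rw [he] at hcard
        simp at hcard
      · intro x hxK _ _
        rw [hK0] at hxK
        simp at hxK
    · have hjne : j ≠ j₁ := by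
        rcases hcase with h | h
        · exact absurd h hj0
        · exact h
      obtain ⟨τ, hτ⟩ := hgood j (by omega) (by omega) hjne
      have hτσ : τ ⊆ σ j := by
        have : τ ∈ cUnion σ j ∩ (σ j).powerset := by
          rw [hτ]; exact mem_powerset_self τ
        exact mem_powerset.mp (mem_inter.mp this).2
      refine step_any j hj τ ?_ hτσ z hz ?_
      · intro e he hcard
        rw [subset_inter_iff] at he
        have : e ∈ cUnion σ j ∩ (σ j).powerset := by
          rw [hτ]; exact mem_powerset.mpr he.1
        simp only [hKf, indOn, mem_filter]
        exact ⟨(mem_inter.mp this).1, he.2⟩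
      · intro x hxK hxσ _
        simp only [hKf, indOn, mem_filter] at hxK
        have : ({x} : Finset V) ∈ cUnion σ j ∩ (σ j).powerset := by
          refine mem_inter.mpr ⟨hxK.1, mem_powerset.mpr ?_⟩
          rw [singleton_subset_iff]
          exact (mem_inter.mp hxσ).1
        rw [hτ, mem_powerset, singleton_subset_iff] at this
        exact mem_inter.mpr ⟨this, (mem_inter.mp hxσ).2⟩
  -- all cycles of Kf j bound, for j ≤ j₁
  have Q : ∀ j, j ≤ j₁ → ∀ z, IsNCycle (Kf j) 1 z → IsNBdry A 1 z := by
    intro j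
    induction j with
    | zero =>
      intro _ z hz
      have hsub := hz.1.1
      rw [hK0, subset_empty] at hsub
      rw [hsub]
      exact isNBdry_empty A 1
    | succ j ih =>
      intro hj z hz
      have hjm : j < m := by omega
      obtain ⟨z', hz'c, D, hD, heq⟩ := good_inst j hjm
        (by rcases Nat.eq_zero_or_pos j with h | h
            · exact Or.inl h
            · exact Or.inr (by omega)) z hz
      have hz'b : IsNBdry A 1 z' := ih (by omega) z' hz'c
      rw [heq]
      exact isNBdry_chAdd hz'b ⟨D, hD, rfl⟩
  -- the bad step data
  obtain ⟨u, hu, τ₀, hτ₀⟩ := hws j₁ hj₁m.1 (by omega)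
  have hτ₀sub : τ₀ ⊆ (σ j₁).erase u := by
    have : τ₀ ∈ indOn (cUnion σ j₁) ((σ j₁).erase u) := by
      rw [hτ₀]; exact mem_powerset_self τ₀
    exact (mem_filter.mp this).2
  have hτ₀σ : τ₀ ⊆ σ j₁ := hτ₀sub.trans (erase_subset _ _)
  have hpair₀ : ∀ e, e ⊆ τ₀ ∩ W → e.card = 2 → e ∈ Kf j₁ := by
    intro e he _
    rw [subset_inter_iff] at he
    have : e ∈ indOn (cUnion σ j₁) ((σ j₁).erase u) := by
      rw [hτ₀]; exact mem_powerset.mpr he.1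
    simp only [hKf, indOn, mem_filter] at this ⊢
    exact ⟨this.1, he.2⟩
  have hsing₀ : ∀ z, ({u} : Finset V) ∉ bdry (z ∩ Kf j₁) →
      ∀ x : V, ({x} : Finset V) ∈ Kf j₁ → x ∈ σ j₁ ∩ W →
        ({x} : Finset V) ∈ bdry (z ∩ Kf j₁) → x ∈ τ₀ ∩ W := by
    intro z hucon x hxK hxσ hxb
    have hxu : x ≠ u := by
      intro h
      rw [h] at hxb
      exact hucon hxb
    simp only [hKf, indOn, mem_filter] at hxK
    have : ({x} : Finset V) ∈ indOn (cUnion σ j₁) ((σ j₁).erase u) := by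
      simp only [indOn, mem_filter]
      refine ⟨hxK.1, ?_⟩
      rw [singleton_subset_iff]
      exact mem_erase.mpr ⟨hxu, (mem_inter.mp hxσ).1⟩
    rw [hτ₀, mem_powerset, singleton_subset_iff] at this
    exact mem_inter.mpr ⟨this, (mem_inter.mp hxσ).2⟩
  have hj₁m' : j₁ < m := by omega
  have key : ∀ z, IsNCycle (Kf (j₁+1)) 1 z → ¬ IsNBdry A 1 z →
      ({u} : Finset V) ∈ bdry (z ∩ Kf j₁) := by
    intro z hz hbz
    by_contra hcon
    obtain ⟨z', hz'c, D, hD, heq⟩ := step_any j₁ hj₁m' τ₀ hpair₀ hτ₀σ z hz (hsing₀ z hcon)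
    apply hbz
    rw [heq]
    exact isNBdry_chAdd (Q j₁ le_rfl z' hz'c) ⟨D, hD, rfl⟩
  -- the pair invariant
  have R : ∀ j, j₁ + 1 ≤ j → j ≤ m → ∀ z₁ z₂, IsNCycle (Kf j) 1 z₁ → IsNCycle (Kf j) 1 z₂ →
      ¬ IsNBdry A 1 z₁ → ¬ IsNBdry A 1 z₂ → IsNBdry A 1 (chAdd z₁ z₂) := by
    intro j hj
    induction j, hj using Nat.le_induction with
    | base =>
      intro _ z₁ z₂ hz₁ hz₂ hnb1 hnb2
      have hu1 := key z₁ hz₁ hnb1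
      have hu2 := key z₂ hz₂ hnb2
      set z := chAdd z₁ z₂ with hzdef
      have hzc : IsNCycle (Kf (j₁+1)) 1 z := by
        refine ⟨isNChain_chAdd hz₁.1 hz₂.1, ?_⟩
        rw [bdry_chAdd, hz₁.2, hz₂.2]
        simp [chAdd]
      have hinter : z ∩ Kf j₁ = chAdd (z₁ ∩ Kf j₁) (z₂ ∩ Kf j₁) := by
        ext e
        simp only [hzdef, chAdd, mem_union, mem_sdiff, mem_inter]
        tauto
      have hucon : ({u} : Finset V) ∉ bdry (z ∩ Kf j₁) := by
        rw [hinter, bdry_chAdd, chAdd_eq_symmDiff, mem_symmDiff]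
        rintro (⟨_, h⟩ | ⟨_, h⟩)
        · exact h hu2
        · exact h hu1
      obtain ⟨z', hz'c, D, hD, heq⟩ := step_any j₁ hj₁m' τ₀ hpair₀ hτ₀σ z hzc (hsing₀ z hucon)
      rw [heq]
      exact isNBdry_chAdd (Q j₁ le_rfl z' hz'c) ⟨D, hD, rfl⟩
    | succ j hjge ih =>
      intro hjm z₁ z₂ hz₁ hz₂ hnb1 hnb2
      have hjm' : j < m := by omega
      have hjne : j ≠ j₁ := by omega
      obtain ⟨z₁', hc1, D₁, hD1, he1⟩ := good_inst j hjm' (Or.inr hjne) z₁ hz₁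
      obtain ⟨z₂', hc2, D₂, hD2, he2⟩ := good_inst j hjm' (Or.inr hjne) z₂ hz₂
      have hnb1' : ¬ IsNBdry A 1 z₁' := by
        intro hbd
        apply hnb1
        rw [he1]
        exact isNBdry_chAdd hbd ⟨D₁, hD1, rfl⟩
      have hnb2' : ¬ IsNBdry A 1 z₂' := by
        intro hbd
        apply hnb2
        rw [he2]
        exact isNBdry_chAdd hbd ⟨D₂, hD2, rfl⟩
      have hsum := ih (by omega) z₁' z₂' hc1 hc2 hnb1' hnb2'
      rw [he1, he2]
      have hco : chAdd (chAdd z₁' (bdry D₁)) (chAdd z₂' (bdry D₂))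
          = chAdd (chAdd z₁' z₂') (chAdd (bdry D₁) (bdry D₂)) := by
        simp only [chAdd_eq_symmDiff]
        exact symmDiff_symmDiff_symmDiff_comm _ _ _ _
      rw [hco]
      exact isNBdry_chAdd hsum (isNBdry_chAdd ⟨D₁, hD1, rfl⟩ ⟨D₂, hD2, rfl⟩)
  rw [hAm] at h₁ h₂
  exact R m (by omega) le_rfl c₁ c₂ h₁ h₂ hb₁ hb₂


section CycleStuff

variable {n : ℕ} {f : ℕ → V}

lemma mod_succ_cases (i n : ℕ) (hi : i < n) :
    ((i+1) % n = i+1 ∧ i+1 < n) ∨ ((i+1) % n = 0 ∧ i+1 = n) := by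
  rcases Nat.lt_or_ge (i+1) n with h | h
  · exact Or.inl ⟨Nat.mod_eq_of_lt h, h⟩
  · have h' : i+1 = n := by omega
    exact Or.inr ⟨by rw [h', Nat.mod_self], h'⟩

lemma cycE_card (hn : 3 ≤ n) (hf : ∀ i j, i < n → j < n → f i = f j → i = j)
    {i : ℕ} (hi : i < n) : ({f i, f ((i+1) % n)} : Finset V).card = 2 := by
  apply card_pair
  intro h
  have h1 : (i+1) % n < n := Nat.mod_lt _ (by omega)
  have h2 := hf i ((i+1)%n) hi h1 h
  rcases mod_succ_cases i n hi with ⟨h3, h4⟩ | ⟨h3, h4⟩ <;> omega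

lemma cycE_inj (hn : 3 ≤ n) (hf : ∀ i j, i < n → j < n → f i = f j → i = j) :
    ∀ i j, i < n → j < n → ({f i, f ((i+1)%n)} : Finset V) = {f j, f ((j+1)%n)} → i = j := by
  intro i j hi hj h
  have hi1 : (i+1) % n < n := Nat.mod_lt _ (by omega)
  have hj1 : (j+1) % n < n := Nat.mod_lt _ (by omega)
  have hfi : f i ∈ ({f j, f ((j+1)%n)} : Finset V) := by rw [← h]; simp
  rcases mem_insert.mp hfi with h1 | h1
  · exact hf i j hi hj h1
  · have hij : i = (j+1)%n := hf _ _ hi hj1 (mem_singleton.mp h1)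
    have hfj : f j ∈ ({f i, f ((i+1)%n)} : Finset V) := by rw [h]; simp
    rcases mem_insert.mp hfj with h2 | h2
    · exact (hf j i hj hi h2).symm
    · have hji : j = (i+1)%n := hf _ _ hj hi1 (mem_singleton.mp h2)
      exfalso
      rcases mod_succ_cases i n hi with ⟨h3, h4⟩ | ⟨h3, h4⟩ <;>
        rcases mod_succ_cases j n hj with ⟨h5, h6⟩ | ⟨h5, h6⟩ <;> omega

lemma cycE_prev (hn : 3 ≤ n) {k : ℕ} (hk : k < n) :
    ∃ k', k' < n ∧ k' ≠ k ∧ (k'+1) % n = k := by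
  rcases Nat.eq_zero_or_pos k with rfl | hpos
  · exact ⟨n-1, by omega, by omega, by rw [show n-1+1 = n by omega, Nat.mod_self]⟩
  · exact ⟨k-1, by omega, by omega, by rw [Nat.mod_eq_of_lt (by omega)]; omega⟩

lemma succ_mod_inj (n a b : ℕ) (ha : a < n) (hb : b < n) (h : (a+1)%n = (b+1)%n) : a = b := by
  rcases mod_succ_cases a n ha with ⟨h1,h2⟩|⟨h1,h2⟩ <;>
    rcases mod_succ_cases b n hb with ⟨h3,h4⟩|⟨h3,h4⟩ <;> omega

lemma cyc_filter_eq (hn : 3 ≤ n) (hf : ∀ i j, i < n → j < n → f i = f j → i = j)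
    {k : ℕ} (hk : k < n) :
    ((range n).image (fun i => ({f i, f ((i+1)%n)} : Finset V))).filter
      (fun e => f k ∈ e) =
    {({f k, f ((k+1)%n)} : Finset V),
     (fun i => ({f i, f ((i+1)%n)} : Finset V)) (Classical.choose (cycE_prev hn hk))} := by
  obtain ⟨hk'lt, hk'ne, hk'succ⟩ := Classical.choose_spec (cycE_prev hn hk)
  set k' := Classical.choose (cycE_prev hn hk)
  ext e
  simp only [mem_filter, mem_image, mem_range, mem_insert, mem_singleton]
  constructor
  · rintro ⟨⟨i, hi, rfl⟩, hmem⟩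
    rcases mem_insert.mp hmem with h1 | h1
    · have : k = i := hf _ _ hk hi h1
      subst this
      exact Or.inl rfl
    · have h2 : k = (i+1)%n := hf _ _ hk (Nat.mod_lt _ (by omega)) (mem_singleton.mp h1)
      right
      have : i = k' := succ_mod_inj n i k' hi hk'lt (by rw [hk'succ]; omega)
      rw [this]
  · intro h
    rcases h with rfl | rfl
    · exact ⟨⟨k, hk, rfl⟩, by simp⟩
    · refine ⟨⟨k', hk'lt, rfl⟩, ?_⟩
      rw [hk'succ]
      simp

end CycleStuff


section CycleStuff2

variable {n : ℕ} {f : ℕ → V}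

lemma cyc_bdry (hn : 3 ≤ n) (hf : ∀ i j, i < n → j < n → f i = f j → i = j) :
    bdry ((range n).image (fun i => ({f i, f ((i+1)%n)} : Finset V))) = ∅ := by
  set c := (range n).image (fun i => ({f i, f ((i+1)%n)} : Finset V)) with hc
  have hcard : ∀ e ∈ c, e.card = 2 := by
    intro e he
    obtain ⟨i, hi, rfl⟩ := mem_image.mp he
    exact cycE_card hn hf (mem_range.mp hi)
  rw [bdry_one_chain c hcard]
  have : (univ.filter fun x => Odd (deg c x)) = ∅ := by
    rw [filter_eq_empty_iff]
    intro x _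
    by_cases hx : ∃ k, k < n ∧ f k = x
    · obtain ⟨k, hk, rfl⟩ : ∃ k, k < n ∧ f k = x := hx
      rw [deg, cyc_filter_eq hn hf hk]
      obtain ⟨hk'lt, hk'ne, hk'succ⟩ := Classical.choose_spec (cycE_prev hn hk)
      rw [card_insert_of_notMem, card_singleton]
      · simp
      · intro hmem
        rw [mem_singleton] at hmem
        exact hk'ne (cycE_inj hn hf _ _ (Classical.choose_spec (cycE_prev hn hk)).1 hk hmem.symm)
    · have hfil : c.filter (fun e => x ∈ e) = ∅ := by
        rw [filter_eq_empty_iff]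
        intro e he hx'
        obtain ⟨i, hi, rfl⟩ := mem_image.mp he
        rcases mem_insert.mp hx' with h | h
        · exact hx ⟨i, mem_range.mp hi, h.symm⟩
        · exact hx ⟨(i+1)%n, Nat.mod_lt _ (by omega), (mem_singleton.mp h).symm⟩
      rw [deg, hfil]
      simp
  rw [this, image_empty]

lemma cyc_card (hn : 3 ≤ n) (hf : ∀ i j, i < n → j < n → f i = f j → i = j) :
    ((range n).image (fun i => ({f i, f ((i+1)%n)} : Finset V))).card = n := by
  rw [card_image_of_injOn, card_range]
  intro i hi j hj h
  exact cycE_inj hn hf i j (mem_range.mp hi) (mem_range.mp hj) h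

lemma cyc_biUnion (hn : 3 ≤ n) (hf : ∀ i j, i < n → j < n → f i = f j → i = j) :
    ((range n).image (fun i => ({f i, f ((i+1)%n)} : Finset V))).biUnion id
      = (range n).image f := by
  ext x
  simp only [mem_biUnion, mem_image, mem_range, id]
  constructor
  · rintro ⟨e, ⟨i, hi, rfl⟩, hx⟩
    rcases mem_insert.mp hx with h | h
    · exact ⟨i, hi, h.symm⟩
    · exact ⟨(i+1)%n, Nat.mod_lt _ (by omega), (mem_singleton.mp h).symm⟩
  · rintro ⟨k, hk, rfl⟩
    exact ⟨{f k, f ((k+1)%n)}, ⟨k, hk, rfl⟩, by simp⟩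

lemma isCycleEdges_bdry {c : Finset (Finset V)} (h : IsCycleEdges c) : bdry c = ∅ := by
  obtain ⟨n, hn, f, hf, rfl⟩ := h
  exact cyc_bdry hn hf

lemma isCycleEdges_card2 {c : Finset (Finset V)} (h : IsCycleEdges c) : ∀ e ∈ c, e.card = 2 := by
  obtain ⟨n, hn, f, hf, rfl⟩ := h
  intro e he
  obtain ⟨i, hi, rfl⟩ := mem_image.mp he
  exact cycE_card hn hf (mem_range.mp hi)

lemma isCycleEdges_nonempty {c : Finset (Finset V)} (h : IsCycleEdges c) : c.Nonempty := by
  obtain ⟨n, hn, f, hf, rfl⟩ := h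
  exact (Finset.Nonempty.image ⟨0, mem_range.mpr (by omega)⟩ _)

end CycleStuff2


lemma extract_cycle (c : Finset (Finset V)) (hc2 : ∀ s ∈ c, s.card = 2)
    (hbd : bdry c = ∅) (hne : c.Nonempty) :
    ∃ c', c' ⊆ c ∧ IsCycleEdges c' := by
  classical
  have heven : ∀ x, ¬ Odd (deg c x) := bdry_eq_empty_iff_even_deg c hc2 hbd
  have hstep : ∀ p q : V, ({p, q} : Finset V) ∈ c → p ≠ q →
      ∃ r, ({q, r} : Finset V) ∈ c ∧ r ≠ p ∧ r ≠ q := by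
    intro p q hpq hnepq
    have h1 : ({p,q} : Finset V) ∈ c.filter (fun s => q ∈ s) := mem_filter.mpr ⟨hpq, by simp⟩
    have h2 : 2 ≤ (c.filter (fun s => q ∈ s)).card := by
      have hpos : 0 < (c.filter (fun s => q ∈ s)).card := card_pos.mpr ⟨_, h1⟩
      have hev := heven q
      rw [deg, Nat.odd_iff] at hev
      omega
    obtain ⟨e', he', hnee⟩ := Finset.exists_mem_ne (show 1 < (c.filter (fun s => q ∈ s)).card by omega) ({p,q} : Finset V)
    have he'c : e' ∈ c := (mem_filter.mp he').1
    have hqe' : q ∈ e' := (mem_filter.mp he').2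
    have hcard1 : (e'.erase q).card = 1 := by rw [card_erase_of_mem hqe', hc2 e' he'c]
    obtain ⟨r, hr⟩ := card_eq_one.mp hcard1
    have hrq : r ≠ q := by
      have : r ∈ e'.erase q := hr ▸ mem_singleton_self r
      exact ne_of_mem_erase this
    have he'eq : e' = {q, r} := by
      rw [← insert_erase hqe', hr]
    refine ⟨r, by rw [← he'eq]; exact he'c, ?_, hrq⟩
    intro hrp
    apply hnee
    rw [he'eq, hrp]
    ext y; simp; tauto
  obtain ⟨e₀, he₀⟩ := hne
  obtain ⟨p₀, q₀, hpq₀, he₀eq⟩ := card_eq_two.mp (hc2 e₀ he₀)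
  subst he₀eq
  set nxt : V × V → V × V := fun pq =>
    if h : ({pq.1, pq.2} : Finset V) ∈ c ∧ pq.1 ≠ pq.2 then
      (pq.2, Classical.choose (hstep pq.1 pq.2 h.1 h.2))
    else pq with hnxt
  set g : ℕ → V × V := fun k => nxt^[k] (p₀, q₀) with hg
  have hgs : ∀ k, g (k+1) = nxt (g k) := by
    intro k
    simp only [hg, Function.iterate_succ_apply']
  have hinv : ∀ k, ({(g k).1, (g k).2} : Finset V) ∈ c ∧ (g k).1 ≠ (g k).2 := by
    intro k
    induction k with
    | zero => exact ⟨he₀, hpq₀⟩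
    | succ k ih =>
      rw [hgs k, hnxt]
      simp only [dif_pos ih]
      obtain ⟨hc', hr1, hr2⟩ := Classical.choose_spec (hstep _ _ ih.1 ih.2)
      exact ⟨hc', fun h => hr2 h.symm⟩
  have hcons : ∀ k, (g (k+1)).1 = (g k).2 := by
    intro k
    rw [hgs k, hnxt]
    simp only [dif_pos (hinv k)]
  have hnob : ∀ k, (g (k+1)).2 ≠ (g k).1 := by
    intro k
    rw [hgs k, hnxt]
    simp only [dif_pos (hinv k)]
    exact (Classical.choose_spec (hstep _ _ (hinv k).1 (hinv k).2)).2.1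
  set w : ℕ → V := fun k => (g k).1 with hwdef
  have hwedge : ∀ k, ({w k, w (k+1)} : Finset V) ∈ c := by
    intro k
    have h2 : w (k+1) = (g k).2 := hcons k
    rw [h2]
    exact (hinv k).1
  have hwne : ∀ k, w k ≠ w (k+1) := by
    intro k
    have h2 : w (k+1) = (g k).2 := hcons k
    rw [h2]
    exact (hinv k).2
  have hwnob : ∀ k, w (k+2) ≠ w k := by
    intro k
    have h2 : w (k+2) = (g (k+1)).2 := hcons (k+1)
    rw [h2]
    exact hnob k
  have hrep : ∃ j, ∃ i, i < j ∧ w i = w j := by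
    obtain ⟨a, ha, b, hb, hab, hfab⟩ := Finset.exists_ne_map_eq_of_card_lt_of_maps_to
      (s := range (Fintype.card V + 1)) (t := (univ : Finset V))
      (by rw [card_range, card_univ]; omega) (fun a _ => mem_univ (w a))
    rcases Nat.lt_or_ge a b with h | h
    · exact ⟨b, a, h, hfab⟩
    · exact ⟨a, b, by omega, hfab.symm⟩
  set jm := Nat.find hrep with hjm
  obtain ⟨i0, hi0lt, hi0eq⟩ := Nat.find_spec hrep
  have hmin : ∀ j', j' < jm → ∀ i', i' < j' → w i' ≠ w j' := by
    intro j' hj' i' hi' heq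
    exact Nat.find_min hrep hj' ⟨i', hi', heq⟩
  set n := jm - i0 with hndef
  set f : ℕ → V := fun k => w (i0 + k) with hfdef
  have hfinj : ∀ a b, a < n → b < n → f a = f b → a = b := by
    intro a b ha hb heq
    by_contra hne'
    rcases Nat.lt_or_ge a b with h | h
    · exact hmin (i0 + b) (by omega) (i0 + a) (by omega) heq
    · exact hmin (i0 + a) (by omega) (i0 + b) (by omega) heq.symm
  have hn3 : 3 ≤ n := by
    by_contra hlt
    rcases (show n = 1 ∨ n = 2 by omega) with h | h
    · apply hwne i0
      have : i0 + 1 = jm := by omega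
      rw [this]
      exact hi0eq
    · apply hwnob i0
      have : i0 + 2 = jm := by omega
      rw [this]
      exact hi0eq.symm
  refine ⟨(range n).image (fun k => ({f k, f ((k+1)%n)} : Finset V)), ?_, n, hn3, f, hfinj, rfl⟩
  intro e he
  obtain ⟨k, hk, rfl⟩ := mem_image.mp he
  rw [mem_range] at hk
  rcases mod_succ_cases k n hk with ⟨h1, h2⟩ | ⟨h1, h2⟩
  · rw [h1]
    have := hwedge (i0 + k)
    have heq : i0 + k + 1 = i0 + (k+1) := by omega
    rw [heq] at this
    exact this
  · rw [h1]
    have hk' : k = n - 1 := by omega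
    subst hk'
    have hfk : f (n-1) = w (jm - 1) := by
      rw [hfdef]
      have : i0 + (n-1) = jm - 1 := by omega
      simp only
      rw [this]
    have hf0 : f 0 = w i0 := by
      rw [hfdef]
      simp only
      rw [Nat.add_zero]
    rw [hfk, hf0, hi0eq]
    have := hwedge (jm - 1)
    have heq : jm - 1 + 1 = jm := by omega
    rw [heq] at this
    exact this


lemma mod_small (x n : ℕ) (h0 : 0 < n) (h1 : x < 2*n) :
    x % n = if x < n then x else x - n := by
  split_ifs with h
  · exact Nat.mod_eq_of_lt h
  · rw [Nat.mod_eq_sub_mod (by omega), Nat.mod_eq_of_lt (by omega)]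

lemma chord_split {n : ℕ} {f : ℕ → V} (hn : 3 ≤ n)
    (hf : ∀ i j, i < n → j < n → f i = f j → i = j)
    {p q : ℕ} (hp : p < q) (hq : q < n) (h2 : 2 ≤ q - p) (h2' : q - p ≤ n - 2)
    (he : ({f p, f q} : Finset V) ∉ (range n).image (fun i => ({f i, f ((i+1)%n)} : Finset V))) :
    ∃ c₁ c₂ : Finset (Finset V),
      IsCycleEdges c₁ ∧ IsCycleEdges c₂ ∧
      c₁ ⊆ insert ({f p, f q} : Finset V)
        ((range n).image (fun i => ({f i, f ((i+1)%n)} : Finset V))) ∧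
      c₂ ⊆ insert ({f p, f q} : Finset V)
        ((range n).image (fun i => ({f i, f ((i+1)%n)} : Finset V))) ∧
      c₁.card < n ∧ c₂.card < n ∧
      chAdd c₁ c₂ = (range n).image (fun i => ({f i, f ((i+1)%n)} : Finset V)) := by
  classical
  set E : ℕ → Finset V := fun i => ({f i, f ((i+1)%n)} : Finset V) with hE
  set c : Finset (Finset V) := (range n).image E with hc
  set e : Finset V := {f p, f q} with hedef
  set n₁ := q - p + 1 with hn₁
  set n₂ := n - (q - p) + 1 with hn₂
  set f₁ : ℕ → V := fun k => f (p + k) with hf₁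
  set f₂ : ℕ → V := fun k => f ((q + k) % n) with hf₂
  have hn₁3 : 3 ≤ n₁ := by omega
  have hn₂3 : 3 ≤ n₂ := by omega
  have hn₂n : n₂ ≤ n - 1 := by omega
  have hf₁inj : ∀ a b, a < n₁ → b < n₁ → f₁ a = f₁ b → a = b := by
    intro a b ha hb hab
    have := hf (p+a) (p+b) (by omega) (by omega) hab
    omega
  have hmod2 : ∀ a, a < n₂ → (q + a) % n = if q + a < n then q + a else q + a - n := by
    intro a ha
    exact mod_small _ _ (by omega) (by omega)
  have hf₂inj : ∀ a b, a < n₂ → b < n₂ → f₂ a = f₂ b → a = b := by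
    intro a b ha hb hab
    have h1 := hf ((q+a) % n) ((q+b) % n) (Nat.mod_lt _ (by omega)) (Nat.mod_lt _ (by omega)) hab
    rw [hmod2 a ha, hmod2 b hb] at h1
    split_ifs at h1 <;> omega
  set E₁ : ℕ → Finset V := fun k => ({f₁ k, f₁ ((k+1)%n₁)} : Finset V) with hE₁
  set E₂ : ℕ → Finset V := fun k => ({f₂ k, f₂ ((k+1)%n₂)} : Finset V) with hE₂
  set c₁ : Finset (Finset V) := (range n₁).image E₁ with hc₁
  set c₂ : Finset (Finset V) := (range n₂).image E₂ with hc₂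
  have hE1eq : ∀ k, k < n₁ - 1 → E₁ k = E (p + k) := by
    intro k hk
    have hm1 : (k+1) % n₁ = k+1 := Nat.mod_eq_of_lt (by omega)
    have hm2 : (p+k+1) % n = p + (k+1) := by
      rw [Nat.mod_eq_of_lt (by omega)]
      omega
    show ({f₁ k, f₁ ((k+1)%n₁)} : Finset V) = {f (p+k), f ((p+k+1)%n)}
    rw [hm1, hm2, hf₁]
  have hE1last : E₁ (n₁ - 1) = e := by
    have hm1 : (n₁ - 1 + 1) % n₁ = 0 := by
      rw [show n₁ - 1 + 1 = n₁ by omega, Nat.mod_self]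
    show ({f₁ (n₁-1), f₁ ((n₁-1+1)%n₁)} : Finset V) = e
    rw [hm1, hf₁]
    simp only
    rw [show p + (n₁ - 1) = q by omega, Nat.add_zero, hedef]
    exact pair_comm _ _
  have hE2eq : ∀ k, k < n₂ - 1 → E₂ k = E ((q + k) % n) := by
    intro k hk
    have hm1 : (k+1) % n₂ = k+1 := Nat.mod_eq_of_lt (by omega)
    have hm3 : ((q+k)%n + 1) % n = (q + (k+1)) % n := by
      rw [Nat.mod_add_mod]
      congr 1
    show ({f₂ k, f₂ ((k+1)%n₂)} : Finset V) = {f ((q+k)%n), f (((q+k)%n + 1)%n)}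
    rw [hm1, hm3, hf₂]
  have hE2last : E₂ (n₂ - 1) = e := by
    have hm1 : (n₂ - 1 + 1) % n₂ = 0 := by
      rw [show n₂ - 1 + 1 = n₂ by omega, Nat.mod_self]
    show ({f₂ (n₂-1), f₂ ((n₂-1+1)%n₂)} : Finset V) = e
    rw [hm1, hf₂]
    simp only
    rw [show q + (n₂ - 1) = n + p by omega, Nat.add_zero, Nat.add_mod_left,
      Nat.mod_eq_of_lt (by omega), Nat.mod_eq_of_lt (by omega), hedef]
  set P : ℕ → Prop := fun i => p ≤ i ∧ i < q with hP
  set S₁ : Finset (Finset V) := ((range n).filter P).image E with hS₁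
  set S₂ : Finset (Finset V) := ((range n).filter (fun i => ¬ P i)).image E with hS₂
  have hcup : c = S₁ ∪ S₂ := by
    rw [hS₁, hS₂, ← image_union, filter_union_filter_not_eq]
  have hEinj : ∀ i j, i < n → j < n → E i = E j → i = j := cycE_inj hn hf
  have hdisj : ∀ t, t ∈ S₁ → t ∈ S₂ → False := by
    intro t ht1 ht2
    obtain ⟨i, hi, rfl⟩ := mem_image.mp ht1
    obtain ⟨j, hj, hji⟩ := mem_image.mp ht2
    rw [mem_filter, mem_range] at hi hj
    have := hEinj j i hj.1 hi.1 hji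
    subst this
    exact hj.2 hi.2
  have heS₁ : e ∉ S₁ := fun h => he (hcup ▸ mem_union_left _ h)
  have heS₂ : e ∉ S₂ := fun h => he (hcup ▸ mem_union_right _ h)
  have hc1eq : c₁ = insert e S₁ := by
    ext t
    simp only [hc₁, mem_image, mem_range, mem_insert]
    constructor
    · rintro ⟨k, hk, rfl⟩
      rcases eq_or_ne k (n₁ - 1) with rfl | hkne
      · exact Or.inl hE1last
      · right
        rw [hE1eq k (by omega)]
        exact mem_image.mpr ⟨p + k, mem_filter.mpr ⟨mem_range.mpr (by omega), by omega, by omega⟩, rfl⟩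
    · rintro (rfl | ht)
      · exact ⟨n₁ - 1, by omega, hE1last⟩
      · obtain ⟨i, hi, rfl⟩ := mem_image.mp ht
        rw [mem_filter, mem_range] at hi
        refine ⟨i - p, by omega, ?_⟩
        rw [hE1eq (i - p) (by omega)]
        congr 1
        omega
  have hc2eq : c₂ = insert e S₂ := by
    ext t
    simp only [hc₂, mem_image, mem_range, mem_insert]
    constructor
    · rintro ⟨k, hk, rfl⟩
      rcases eq_or_ne k (n₂ - 1) with rfl | hkne
      · exact Or.inl hE2last
      · right
        rw [hE2eq k (by omega)]
        refine mem_image.mpr ⟨(q + k) % n, mem_filter.mpr ⟨mem_range.mpr (Nat.mod_lt _ (by omega)), ?_⟩, rfl⟩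
        rw [hmod2 k (by omega), hP]
        split_ifs with h <;> simp only <;> omega
    · rintro (rfl | ht)
      · exact ⟨n₂ - 1, by omega, hE2last⟩
      · obtain ⟨i, hi, rfl⟩ := mem_image.mp ht
        rw [mem_filter, mem_range] at hi
        have hiP : ¬ (p ≤ i ∧ i < q) := hi.2
        rcases Nat.lt_or_ge i p with h | h
        · refine ⟨n - q + i, by omega, ?_⟩
          rw [hE2eq (n - q + i) (by omega)]
          congr 1
          rw [show q + (n - q + i) = n + i by omega, Nat.add_mod_left, Nat.mod_eq_of_lt hi.1]
        · have hiq : q ≤ i := by omega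
          refine ⟨i - q, by omega, ?_⟩
          rw [hE2eq (i - q) (by omega)]
          congr 1
          rw [show q + (i - q) = i by omega, Nat.mod_eq_of_lt hi.1]
  refine ⟨c₁, c₂, ⟨n₁, hn₁3, f₁, hf₁inj, rfl⟩, ⟨n₂, hn₂3, f₂, hf₂inj, rfl⟩, ?_, ?_, ?_, ?_, ?_⟩
  · rw [hc1eq]
    intro t ht
    rcases mem_insert.mp ht with rfl | ht'
    · exact mem_insert_self _ _
    · exact mem_insert_of_mem (by rw [hcup]; exact mem_union_left _ ht')
  · rw [hc2eq]
    intro t ht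
    rcases mem_insert.mp ht with rfl | ht'
    · exact mem_insert_self _ _
    · exact mem_insert_of_mem (by rw [hcup]; exact mem_union_right _ ht')
  · rw [hc₁, card_image_of_injOn, card_range]
    · omega
    · intro a ha b hb hab
      exact cycE_inj hn₁3 hf₁inj a b (mem_range.mp ha) (mem_range.mp hb) hab
  · rw [hc₂, card_image_of_injOn, card_range]
    · omega
    · intro a ha b hb hab
      exact cycE_inj hn₂3 hf₂inj a b (mem_range.mp ha) (mem_range.mp hb) hab
  · rw [hc1eq, hc2eq, hcup]
    ext t
    simp only [chAdd, mem_union, mem_sdiff, mem_insert]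
    by_cases hte : t = e
    · subst hte
      constructor
      · rintro (⟨_, h⟩ | ⟨_, h⟩)
        · exact absurd (Or.inl rfl) h
        · exact absurd (Or.inl rfl) h
      · rintro (h | h)
        · exact absurd h heS₁
        · exact absurd h heS₂
    · constructor
      · rintro (⟨h1, _⟩ | ⟨h1, _⟩)
        · rcases h1 with rfl | h1
          · exact absurd rfl hte
          · exact Or.inl h1
        · rcases h1 with rfl | h1
          · exact absurd rfl hte
          · exact Or.inr h1
      · rintro (h | h)
        · exact Or.inl ⟨Or.inr h, by rintro (rfl | h') <;> [exact hte rfl; exact hdisj t h h']⟩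
        · exact Or.inr ⟨Or.inr h, by rintro (rfl | h') <;> [exact hte rfl; exact hdisj t h' h]⟩


lemma exists_induced_cycle (A : Finset (Finset V))
    (hH : ∃ c, IsNCycle A 1 c ∧ ¬ IsNBdry A 1 c) :
    ∃ c, IsCycleEdges c ∧ IsNChain A 1 c ∧
      (∀ e ∈ A, e.card = 2 → e ⊆ c.biUnion id → e ∈ c) ∧
      IsNCycle A 1 c ∧ ¬ IsNBdry A 1 c := by
  classical
  have hex : ∃ n, ∃ c, (IsNCycle A 1 c ∧ ¬ IsNBdry A 1 c) ∧ c.card = n := by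
    obtain ⟨c, hc⟩ := hH
    exact ⟨c.card, c, hc, rfl⟩
  obtain ⟨c, ⟨hcyc, hnbd⟩, hcard⟩ := Nat.find_spec hex
  have hmin : ∀ c', IsNCycle A 1 c' → ¬ IsNBdry A 1 c' → c.card ≤ c'.card := by
    intro c' h1 h2
    by_contra hlt
    exact Nat.find_min hex (show c'.card < Nat.find hex by omega) ⟨c', ⟨h1, h2⟩, rfl⟩
  have hc2 : ∀ s ∈ c, s.card = 2 := fun s hs => hcyc.1.2 s hs
  have hne : c.Nonempty := by
    rcases c.eq_empty_or_nonempty with rfl | h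
    · exact absurd (isNBdry_empty A 1) hnbd
    · exact h
  obtain ⟨c'', hsub, hcye⟩ := extract_cycle c hc2 hcyc.2 hne
  have hc''cyc : IsNCycle A 1 c'' :=
    ⟨⟨hsub.trans hcyc.1.1, fun s hs => hcyc.1.2 s (hsub hs)⟩, isCycleEdges_bdry hcye⟩
  have hrest : IsNCycle A 1 (c \ c'') := by
    refine ⟨⟨(sdiff_subset).trans hcyc.1.1, fun s hs => hcyc.1.2 s (sdiff_subset hs)⟩, ?_⟩
    have hsd : c \ c'' = chAdd c c'' := by
      rw [chAdd, sdiff_eq_empty_iff_subset.mpr hsub, union_empty]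
    rw [hsd, bdry_chAdd, hcyc.2, isCycleEdges_bdry hcye]
    simp [chAdd]
  have hc''pos : 0 < c''.card := card_pos.mpr (isCycleEdges_nonempty hcye)
  have hrest_card : (c \ c'').card < c.card := by
    have hle := card_le_card hsub
    rw [card_sdiff_of_subset hsub]
    omega
  have hrest_bd : IsNBdry A 1 (c \ c'') := by
    by_contra h
    have := hmin _ hrest h
    omega
  have hc''nbd : ¬ IsNBdry A 1 c'' := by
    intro h
    apply hnbd
    have hcc : c = chAdd c'' (c \ c'') := by
      ext t
      simp only [chAdd, mem_union, mem_sdiff]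
      constructor
      · rintro ht
        by_cases h'' : t ∈ c''
        · exact Or.inl ⟨h'', fun hx => hx.2 h''⟩
        · exact Or.inr ⟨⟨ht, h''⟩, h''⟩
      · rintro (⟨h1, _⟩ | ⟨⟨h1, _⟩, _⟩)
        · exact hsub h1
        · exact h1
    rw [hcc]
    exact isNBdry_chAdd h hrest_bd
  have hc''eq : c'' = c := by
    apply eq_of_subset_of_card_le hsub
    have := hmin c'' hc''cyc hc''nbd
    omega
  have hcyec : IsCycleEdges c := hc''eq ▸ hcye
  obtain ⟨nn, hnn3, f, hfinj, hceq⟩ := hcyec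
  have hcyec' : IsCycleEdges c := ⟨nn, hnn3, f, hfinj, hceq⟩
  refine ⟨c, hcyec', hcyc.1, ?_, hcyc, hnbd⟩
  intro e heA hecard hever
  by_contra hec
  obtain ⟨x, y, hxy, rfl⟩ := card_eq_two.mp hecard
  have hvert : c.biUnion id = (range nn).image f := by
    rw [hceq]
    exact cyc_biUnion hnn3 hfinj
  rw [hvert] at hever
  obtain ⟨p₀, hp₀, hxp⟩ := mem_image.mp (hever (show x ∈ ({x, y} : Finset V) by simp))
  obtain ⟨q₀, hq₀, hyq⟩ := mem_image.mp (hever (show y ∈ ({x, y} : Finset V) by simp))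
  rw [mem_range] at hp₀ hq₀
  have hpq₀ : p₀ ≠ q₀ := by
    rintro rfl
    rw [hxp] at hyq
    exact hxy hyq
  obtain ⟨p, q, hpq, hqn, heqe⟩ : ∃ p q, p < q ∧ q < nn ∧ ({x, y} : Finset V) = {f p, f q} := by
    rcases Nat.lt_or_ge p₀ q₀ with hlt | hge
    · exact ⟨p₀, q₀, hlt, hq₀, by rw [← hxp, ← hyq]⟩
    · exact ⟨q₀, p₀, by omega, hp₀, by rw [← hxp, ← hyq]; exact pair_comm _ _⟩
  have h2 : 2 ≤ q - p := by
    by_contra h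
    have hq1 : q = p + 1 := by omega
    apply hec
    rw [hceq]
    refine mem_image.mpr ⟨p, mem_range.mpr (by omega), ?_⟩
    rw [heqe, hq1, Nat.mod_eq_of_lt (show p + 1 < nn by omega)]
  have h2' : q - p ≤ nn - 2 := by
    by_contra h
    have hp0 : p = 0 ∧ q = nn - 1 := by omega
    apply hec
    rw [hceq]
    refine mem_image.mpr ⟨nn - 1, mem_range.mpr (by omega), ?_⟩
    rw [show (nn-1+1) % nn = 0 by rw [show nn-1+1 = nn by omega, Nat.mod_self],
      heqe, hp0.1, hp0.2]
    exact pair_comm _ _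
  have hecNot : ({f p, f q} : Finset V)
      ∉ (range nn).image (fun i => ({f i, f ((i+1)%nn)} : Finset V)) := by
    rw [← heqe, ← hceq]
    exact hec
  obtain ⟨c₁, c₂, hcy1, hcy2, hsub1, hsub2, hlt1, hlt2, hsum⟩ :=
    chord_split hnn3 hfinj hpq hqn h2 h2' hecNot
  have heA' : ({f p, f q} : Finset V) ∈ A := heqe ▸ heA
  have hcn : c.card = nn := by
    rw [hceq]
    exact cyc_card hnn3 hfinj
  have hchain : ∀ c', IsCycleEdges c' →
      c' ⊆ insert ({f p, f q} : Finset V)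
        ((range nn).image (fun i => ({f i, f ((i+1)%nn)} : Finset V))) →
      IsNChain A 1 c' := by
    intro c' hcy' hsub'
    constructor
    · intro t ht
      rcases mem_insert.mp (hsub' ht) with rfl | ht'
      · exact heA'
      · exact hcyc.1.1 (hceq ▸ ht')
    · exact fun t ht => isCycleEdges_card2 hcy' t ht
  have hb1 : IsNBdry A 1 c₁ := by
    by_contra h
    have := hmin c₁ ⟨hchain c₁ hcy1 hsub1, isCycleEdges_bdry hcy1⟩ h
    omega
  have hb2 : IsNBdry A 1 c₂ := by
    by_contra h
    have := hmin c₂ ⟨hchain c₂ hcy2 hsub2, isCycleEdges_bdry hcy2⟩ h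
    omega
  apply hnbd
  have hcsum : c = chAdd c₁ c₂ := by
    rw [hsum, hceq]
  rw [hcsum]
  exact isNBdry_chAdd hb1 hb2

/-- if `L(X) = M(X) = 2` and `X` admits a weak shelling realizing `M(X)`,
then whenever `H̃₁(X[W]) ≠ 0`, the `1`-skeleton of `X[W]` contains an induced cycle whose
class generates `H̃₁(X[W])`, and `dim H̃₁(X[W]) ≤ 1`. -/
theorem equality_case_two (X : Finset (Finset V)) (hX : IsComplex X)
    (hL : lerayNum X = 2) (hM : Mnum X = 2)
    (hws : ∃ (m : ℕ) (σ : ℕ → Finset V), 0 < m ∧ IsFacetEnum X m σ ∧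
      IsWeakShelling σ m ∧ Mval σ (m - 1) = 2)
    (W : Finset V)
    (hH : ∃ c, IsNCycle (indOn X W) 1 c ∧ ¬ IsNBdry (indOn X W) 1 c) :
    (∃ c, IsCycleEdges c ∧ IsNChain (indOn X W) 1 c ∧
        (∀ e ∈ indOn X W, e.card = 2 → e ⊆ c.biUnion id → e ∈ c) ∧
        IsNCycle (indOn X W) 1 c ∧ ¬ IsNBdry (indOn X W) 1 c) ∧
    (∀ c₁ c₂, IsNCycle (indOn X W) 1 c₁ → IsNCycle (indOn X W) 1 c₂ →
      ¬ IsNBdry (indOn X W) 1 c₁ → ¬ IsNBdry (indOn X W) 1 c₂ →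
      IsNBdry (indOn X W) 1 (chAdd c₁ c₂)) := by
  obtain ⟨m, σ, hm, henum, hwsh, hMv⟩ := hws
  constructor
  · exact exists_induced_cycle (indOn X W) hH
  · intro c₁ c₂ h1 h2 hb1 hb2
    exact dim_le_one X hX m σ hm henum hwsh hMv W c₁ c₂ h1 h2 hb1 hb2
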